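/- In the root system of type A_ℓ, for each 1 ≤ j ≤ ℓ, the Weyl group element (σ_1σ_2⋯σ_ℓ)^j sends α_i to α_{i+j mod (ℓ+1)} for all 0 ≤ i ≤ ℓ, where α_0 = −θ. -/

import Mathlib

/-- The fundamental weight `λ_j` (1-indexed), written in the fundamental weight basis
of the weight lattice `Fin ℓ → ℤ`.  By convention `λ_j = 0` when `j = 0` or `j > ℓ`. -/
def lam (ℓ : ℕ) (j : ℕ) : Fin ℓ → ℤ :=
  if h : 1 ≤ j ∧ j ≤ ℓ then Pi.single (⟨j - 1, by omega⟩ : Fin ℓ) 1 else 0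

/-- The simple root `α_i` (1-indexed) determined by the Cartan matrix `C`
via `α_i = ∑_j C i j • λ_j`. -/
def rootOf (ℓ : ℕ) (C : ℕ → ℕ → ℤ) (i : ℕ) : Fin ℓ → ℤ :=
  fun k => C i (k.1 + 1)

/-- The simple reflection `σ_i = σ_{α_i}`.  Since the fundamental weights are dual to the
simple coroots, `⟨μ, α_i^∨⟩` is the `i`-th coordinate of `μ` in the fundamental weight
basis, and `σ_i μ = μ - ⟨μ, α_i^∨⟩ α_i`. -/
def sref (ℓ : ℕ) (C : ℕ → ℕ → ℤ) (i : ℕ) (μ : Fin ℓ → ℤ) : Fin ℓ → ℤ :=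
  if h : 1 ≤ i ∧ i ≤ ℓ then μ - μ ⟨i - 1, by omega⟩ • rootOf ℓ C i else μ

/-- The Weyl group element `σ_{i₁} σ_{i₂} ⋯ σ_{iₖ}` (applied to `μ`), for a word
`[i₁, i₂, …, iₖ]` in the simple reflections. -/
def word (ℓ : ℕ) (C : ℕ → ℕ → ℤ) (l : List ℕ) (μ : Fin ℓ → ℤ) : Fin ℓ → ℤ :=
  l.foldr (sref ℓ C) μ

/-- The Cartan matrix of type `A_ℓ`. -/
def cartanA : ℕ → ℕ → ℤ := fun i j =>
  if i = j then 2 else if i + 1 = j ∨ j + 1 = i then -1 else 0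

/-- The highest root of type `A_ℓ`: `θ = α_1 + ⋯ + α_ℓ`. -/
def thetaA (ℓ : ℕ) : Fin ℓ → ℤ := ∑ i ∈ Finset.Icc 1 ℓ, rootOf ℓ cartanA i

/-- `α_i` for `0 ≤ i ≤ ℓ`, with the convention `α_0 = -θ`. -/
def alphaIdxA (ℓ : ℕ) (i : ℕ) : Fin ℓ → ℤ :=
  if i = 0 then -thetaA ℓ else rootOf ℓ cartanA i

/-- Transfer map: partial sums of coordinates from index `x` on. -/
def psiN (ℓ : ℕ) (μ : Fin ℓ → ℤ) (x : ℕ) : ℤ :=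
  ∑ k : Fin ℓ, if x ≤ k.1 then μ k else 0

lemma psiN_ge (ℓ : ℕ) (μ : Fin ℓ → ℤ) (x : ℕ) (h : ℓ ≤ x) : psiN ℓ μ x = 0 :=
  Finset.sum_eq_zero (fun k _ => if_neg (by have := k.isLt; omega))

lemma psiN_recover (ℓ : ℕ) (μ : Fin ℓ → ℤ) (x : ℕ) (hx : x < ℓ) :
    psiN ℓ μ x - psiN ℓ μ (x + 1) = μ ⟨x, hx⟩ := by
  unfold psiN
  rw [← Finset.sum_sub_distrib]
  rw [Finset.sum_congr rfl
    (g := fun k => if k = (⟨x, hx⟩ : Fin ℓ) then μ k else 0) ?_]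
  · rw [Finset.sum_ite_eq']; simp
  · intro k _
    simp only [Fin.ext_iff]
    split_ifs <;> first | (exfalso; omega) | ring

lemma psiN_ext (ℓ : ℕ) (μ ν : Fin ℓ → ℤ)
    (h : ∀ x, x ≤ ℓ → psiN ℓ μ x = psiN ℓ ν x) : μ = ν := by
  funext k
  rw [← psiN_recover ℓ μ k.1 k.2, ← psiN_recover ℓ ν k.1 k.2,
    h k.1 (by omega), h (k.1 + 1) (by omega)]

lemma psiN_sub_smul (ℓ : ℕ) (μ ν : Fin ℓ → ℤ) (c : ℤ) (x : ℕ) :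
    psiN ℓ (μ - c • ν) x = psiN ℓ μ x - c * psiN ℓ ν x := by
  unfold psiN
  rw [Finset.mul_sum, ← Finset.sum_sub_distrib]
  apply Finset.sum_congr rfl
  intro k _
  simp only [Pi.sub_apply, Pi.smul_apply, smul_eq_mul]
  split_ifs <;> ring

lemma psiN_neg (ℓ : ℕ) (ν : Fin ℓ → ℤ) (x : ℕ) :
    psiN ℓ (-ν) x = -psiN ℓ ν x := by
  unfold psiN
  rw [← Finset.sum_neg_distrib]
  apply Finset.sum_congr rfl
  intro k _
  simp only [Pi.neg_apply]
  split_ifs <;> ring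

lemma psiN_sum {α : Type*} (ℓ : ℕ) (s : Finset α) (f : α → Fin ℓ → ℤ) (x : ℕ) :
    psiN ℓ (∑ i ∈ s, f i) x = ∑ i ∈ s, psiN ℓ (f i) x := by
  unfold psiN
  rw [Finset.sum_comm]
  apply Finset.sum_congr rfl
  intro k _
  rw [Finset.sum_apply]
  split_ifs
  · rfl
  · exact Finset.sum_const_zero.symm

lemma psiN_root (ℓ i : ℕ) (h1 : 1 ≤ i) (h2 : i ≤ ℓ) (x : ℕ) :
    psiN ℓ (rootOf ℓ cartanA i) x =
      (if x = i - 1 then 1 else 0) - (if x = i then 1 else 0)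
        + (if i = ℓ ∧ x ≤ ℓ then 1 else 0) := by
  have main : ∀ d x, ℓ ≤ x + d → psiN ℓ (rootOf ℓ cartanA i) x =
      (if x = i - 1 then 1 else 0) - (if x = i then 1 else 0)
        + (if i = ℓ ∧ x ≤ ℓ then 1 else 0) := by
    intro d
    induction d with
    | zero =>
      intro x hx
      rw [psiN_ge ℓ _ x (by omega)]
      split_ifs <;> omega
    | succ d ih =>
      intro x hx
      by_cases hxl : ℓ ≤ x
      · rw [psiN_ge ℓ _ x hxl]
        split_ifs <;> omega
      · have hstep : psiN ℓ (rootOf ℓ cartanA i) x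
            = rootOf ℓ cartanA i ⟨x, by omega⟩ + psiN ℓ (rootOf ℓ cartanA i) (x + 1) := by
          have := psiN_recover ℓ (rootOf ℓ cartanA i) x (by omega)
          linarith
        rw [hstep, ih (x + 1) (by omega)]
        show cartanA i (x + 1) + _ = _
        unfold cartanA
        split_ifs <;> omega
  exact main ℓ x (by omega)

lemma psiN_theta (ℓ : ℕ) (hℓ : 1 ≤ ℓ) (x : ℕ) :
    psiN ℓ (thetaA ℓ) x =
      (if x = 0 then 1 else 0) - (if x = ℓ then 1 else 0)
        + (if x ≤ ℓ then 1 else 0) := by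
  unfold thetaA
  rw [psiN_sum]
  rw [Finset.sum_congr rfl
    (fun i hi => psiN_root ℓ i (Finset.mem_Icc.mp hi).1 (Finset.mem_Icc.mp hi).2 x)]
  rw [Finset.sum_add_distrib]
  have h3 : (∑ i ∈ Finset.Icc 1 ℓ, if i = ℓ ∧ x ≤ ℓ then (1:ℤ) else 0)
      = if x ≤ ℓ then 1 else 0 := by
    rw [Finset.sum_congr rfl
      (g := fun i => if i = ℓ then (if x ≤ ℓ then (1:ℤ) else 0) else 0) ?_]
    · rw [Finset.sum_ite_eq', if_pos (Finset.mem_Icc.mpr ⟨hℓ, le_rfl⟩)]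
    · intro i _
      split_ifs <;> simp_all
  rw [h3]
  have h12 : (∑ i ∈ Finset.Icc 1 ℓ,
        ((if x = i - 1 then (1:ℤ) else 0) - (if x = i then 1 else 0)))
      = (if x = 0 then 1 else 0) - (if x = ℓ then 1 else 0) := by
    rw [← Finset.Ico_add_one_right_eq_Icc, Finset.sum_Ico_eq_sum_range]
    have hcongr : ∀ i ∈ Finset.range (ℓ + 1 - 1),
        ((if x = 1 + i - 1 then (1:ℤ) else 0) - (if x = 1 + i then 1 else 0))
          = ((fun t => if x = t then (1:ℤ) else 0) i
              - (fun t => if x = t then (1:ℤ) else 0) (i + 1)) := by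
      intro i _
      have e1 : 1 + i - 1 = i := by omega
      have e2 : 1 + i = i + 1 := by omega
      rw [e1, e2]
    rw [Finset.sum_congr rfl hcongr, Finset.sum_range_sub' (fun t => if x = t then (1:ℤ) else 0)]
    have : ℓ + 1 - 1 = ℓ := by omega
    rw [this]
  rw [h12]

/-- The index map implemented by `σ_{m+1} ⋯ σ_ℓ` in ψ-coordinates. -/
def pmap (ℓ m x : ℕ) : ℕ := if x < m then x else if x = m then ℓ else x - 1

/-- Swap of `i-1` and `i`. -/
def swp (i x : ℕ) : ℕ := if x = i - 1 then i else if x = i then i - 1 else x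

lemma sref_psiN (ℓ i : ℕ) (h1 : 1 ≤ i) (h2 : i ≤ ℓ) (μ : Fin ℓ → ℤ) (x : ℕ) (hx : x ≤ ℓ) :
    psiN ℓ (sref ℓ cartanA i μ) x = psiN ℓ μ (swp i x) - psiN ℓ μ (swp i ℓ) := by
  unfold sref
  rw [dif_pos ⟨h1, h2⟩, psiN_sub_smul, psiN_root ℓ i h1 h2 x]
  have hc : μ ⟨i - 1, by omega⟩ = psiN ℓ μ (i - 1) - psiN ℓ μ i := by
    have h := psiN_recover ℓ μ (i - 1) (by omega)
    have e : i - 1 + 1 = i := by omega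
    rw [e] at h
    rw [← h]
  rw [hc]
  have hzℓ : psiN ℓ μ ℓ = 0 := psiN_ge ℓ μ ℓ le_rfl
  have hand : (if i = ℓ ∧ x ≤ ℓ then (1:ℤ) else 0) = (if i = ℓ then 1 else 0) := by
    by_cases hi2 : i = ℓ
    · rw [if_pos ⟨hi2, hx⟩, if_pos hi2]
    · rw [if_neg (by tauto), if_neg hi2]
  rw [hand]
  unfold swp
  split_ifs <;> first | (exfalso; omega) | (subst_vars; linarith)

lemma word_psiN (ℓ : ℕ) : ∀ (d : ℕ), d ≤ ℓ → ∀ (μ : Fin ℓ → ℤ) (x : ℕ), x ≤ ℓ →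
    psiN ℓ (word ℓ cartanA ((List.range d).map (· + (ℓ - d + 1))) μ) x
      = psiN ℓ μ (pmap ℓ (ℓ - d) x) - psiN ℓ μ (pmap ℓ (ℓ - d) ℓ) := by
  intro d
  induction d with
  | zero =>
    intro _ μ x hx
    have h1 : pmap ℓ (ℓ - 0) x = x := by unfold pmap; split_ifs <;> omega
    have h2 : pmap ℓ (ℓ - 0) ℓ = ℓ := by unfold pmap; split_ifs <;> omega
    rw [h1, h2, psiN_ge ℓ μ ℓ le_rfl]
    simp [word]
  | succ d ih =>
    intro hd μ x hx
    have hlist : ((List.range (d + 1)).map (· + (ℓ - (d + 1) + 1)))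
        = (ℓ - d) :: ((List.range d).map (· + (ℓ - d + 1))) := by
      rw [List.range_succ_eq_map, List.map_cons, List.map_map]
      refine congrArg₂ List.cons (by omega) ?_
      have : ((· + (ℓ - (d + 1) + 1)) ∘ Nat.succ) = (· + (ℓ - d + 1)) := by
        funext t; simp only [Function.comp_apply]; omega
      rw [this]
    rw [hlist]
    rw [show word ℓ cartanA ((ℓ - d) :: ((List.range d).map (· + (ℓ - d + 1)))) μ
        = sref ℓ cartanA (ℓ - d) (word ℓ cartanA ((List.range d).map (· + (ℓ - d + 1))) μ)
      from rfl]
    rw [sref_psiN ℓ (ℓ - d) (by omega) (by omega) _ x hx]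
    rw [ih (by omega) μ (swp (ℓ - d) x) (by unfold swp; split_ifs <;> omega)]
    rw [ih (by omega) μ (swp (ℓ - d) ℓ) (by unfold swp; split_ifs <;> omega)]
    have key : ∀ y, y ≤ ℓ → pmap ℓ (ℓ - d) (swp (ℓ - d) y) = pmap ℓ (ℓ - (d + 1)) y := by
      intro y hy; unfold pmap swp; split_ifs <;> omega
    rw [key x hx, key ℓ le_rfl]
    ring

lemma psiN_alpha (ℓ i : ℕ) (hℓ : 1 ≤ ℓ) (hi : i ≤ ℓ) (y : ℕ) (hy : y ≤ ℓ) :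
    psiN ℓ (alphaIdxA ℓ i) y =
      if i = 0 then
        -((if y = 0 then 1 else 0) - (if y = ℓ then 1 else 0) + 1)
      else
        (if y = i - 1 then 1 else 0) - (if y = i then 1 else 0)
          + (if i = ℓ then 1 else 0) := by
  unfold alphaIdxA
  by_cases h : i = 0
  · rw [if_pos h, if_pos h, psiN_neg, psiN_theta ℓ hℓ y, if_pos hy]
  · rw [if_neg h, if_neg h, psiN_root ℓ i (by omega) hi y]
    have : (if i = ℓ ∧ y ≤ ℓ then (1:ℤ) else 0) = (if i = ℓ then 1 else 0) := by
      by_cases h2 : i = ℓ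
      · rw [if_pos ⟨h2, hy⟩, if_pos h2]
      · rw [if_neg (by tauto), if_neg h2]
    rw [this]

set_option maxHeartbeats 1600000 in
lemma coxeter_step (ℓ : ℕ) (hℓ : 1 ≤ ℓ) (i : ℕ) (hi : i ≤ ℓ) :
    word ℓ cartanA ((List.range ℓ).map (· + 1)) (alphaIdxA ℓ i)
      = alphaIdxA ℓ ((i + 1) % (ℓ + 1)) := by
  apply psiN_ext
  intro x hx
  have hw := word_psiN ℓ ℓ le_rfl (alphaIdxA ℓ i) x hx
  simp only [Nat.sub_self, Nat.zero_add] at hw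
  rw [hw]
  have hmod : (i + 1) % (ℓ + 1) = if i = ℓ then 0 else i + 1 := by
    split_ifs with h
    · rw [h, Nat.mod_self]
    · exact Nat.mod_eq_of_lt (by omega)
  rw [hmod]
  have hp2 : pmap ℓ 0 ℓ = ℓ - 1 := by unfold pmap; split_ifs <;> omega
  rw [hp2, psiN_alpha ℓ i hℓ hi (pmap ℓ 0 x) (by unfold pmap; split_ifs <;> omega),
    psiN_alpha ℓ i hℓ hi (ℓ - 1) (by omega)]
  clear hw hmod hp2
  by_cases hx0 : x = 0
  · have hp1 : pmap ℓ 0 x = ℓ := by unfold pmap; split_ifs <;> omega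
    rw [hp1]
    by_cases h : i = ℓ
    · rw [show (if i = ℓ then 0 else i + 1) = 0 from if_pos h,
        psiN_alpha ℓ 0 hℓ (by omega) x hx]
      split_ifs <;> first | contradiction | omega
    · rw [show (if i = ℓ then 0 else i + 1) = i + 1 from if_neg h,
        psiN_alpha ℓ (i + 1) hℓ (by omega) x hx]
      split_ifs <;> first | contradiction | omega
  · have hp1 : pmap ℓ 0 x = x - 1 := by unfold pmap; split_ifs <;> omega
    rw [hp1]
    by_cases h : i = ℓ
    · rw [show (if i = ℓ then 0 else i + 1) = 0 from if_pos h,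
        psiN_alpha ℓ 0 hℓ (by omega) x hx]
      split_ifs <;> first | contradiction | omega
    · rw [show (if i = ℓ then 0 else i + 1) = i + 1 from if_neg h,
        psiN_alpha ℓ (i + 1) hℓ (by omega) x hx]
      split_ifs <;> first | contradiction | omega

/-- In type `A_ℓ`, for `1 ≤ j ≤ ℓ`, the element `(σ_1 σ_2 ⋯ σ_ℓ)^j` sends
`α_i` to `α_{(i+j) mod (ℓ+1)}` for all `0 ≤ i ≤ ℓ`, where `α_0 = -θ`. -/
theorem typeA_product_power_on_simple_roots (ℓ : ℕ) (hℓ : 1 ≤ ℓ)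
    (j : ℕ) (hj1 : 1 ≤ j) (hj2 : j ≤ ℓ) (i : ℕ) (hi : i ≤ ℓ) :
    (word ℓ cartanA ((List.range ℓ).map (· + 1)))^[j] (alphaIdxA ℓ i)
      = alphaIdxA ℓ ((i + j) % (ℓ + 1)) := by
  have key : ∀ (n i : ℕ), i ≤ ℓ →
      (word ℓ cartanA ((List.range ℓ).map (· + 1)))^[n] (alphaIdxA ℓ i)
        = alphaIdxA ℓ ((i + n) % (ℓ + 1)) := by
    intro n
    induction n with
    | zero =>
      intro i hi
      simp [Nat.mod_eq_of_lt (show i < ℓ + 1 by omega)]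
    | succ n ih =>
      intro i hi
      rw [Function.iterate_succ_apply', ih i hi,
        coxeter_step ℓ hℓ _ (by have := Nat.mod_lt (i + n) (y := ℓ + 1) (by omega); omega)]
      congr 1
      rw [Nat.mod_add_mod]
      congr 1
  exact key j i hi
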